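/- arXiv:1003.5252 — 2 statements merged into one kernel-verified Lean document; each statement's English description precedes it below -/
import Mathlib

section
/- Let d, w₁, w₂, w₃ be odd positive integers, χ : ℤ → ℂ be d-periodic, ξ ∈ ℂ with appropriate nonvanishing conditions. Then for all n ≥ 0 and y₁ ∈ ℂ: (w₁w₂)ⁿ ∑_{a=0}^{w₁d−1} ∑_{b=0}^{w₂d−1} (−1)^{a+b} χ(a)χ(b) ξ^{w₃(a w₂ + b w₁)} E_{n,χ,ξ^{w₁w₂}}(w₃y₁ + (w₃/w₁)a + (w₃/w₂)b) = (w₂w₃)ⁿ ∑_{a=0}^{w₂d−1} ∑_{b=0}^{w₃d−1} (−1)^{a+b} χ(a)χ(b) ξ^{w₁(a w₃ + b w₂)} E_{n,χ,ξ^{w₂w₃}}(w₁y₁ + (w₁/w₂)a + (w₁/w₃)b) = (w₃w₁)ⁿ ∑_{a=0}^{w₃d−1} ∑_{b=0}^{w₁d−1} (−1)^{a+b} χ(a)χ(b) ξ^{w₂(a w₁ + b w₃)} E_{n,χ,ξ^{w₁w₃}}(w₂y₁ + (w₂/w₃)a + (w₂/w₁)b). -/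
open Finset PowerSeries

/-- Generating function of the generalized twisted Euler polynomials:
`2 e^{xt} (ξ^d e^{dt}+1)⁻¹ ∑_{a=0}^{d-1} (-1)^a χ(a) ξ^a e^{at}` in `ℂ[[t]]`. -/
noncomputable def Egf (d : ℕ) (χ : ℤ → ℂ) (ξ x : ℂ) : PowerSeries ℂ :=
  2 * rescale x (exp ℂ) * (ξ ^ d • rescale (d : ℂ) (exp ℂ) + 1)⁻¹ *
    ∑ a ∈ Finset.range d, ((-1 : ℂ) ^ a * χ a * ξ ^ a) • rescale (a : ℂ) (exp ℂ)

/-- The generalized twisted Euler polynomial `E_{n,χ,ξ}(x)`. -/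
noncomputable def E (d : ℕ) (χ : ℤ → ℂ) (ξ x : ℂ) (n : ℕ) : ℂ :=
  (n.factorial : ℂ) * PowerSeries.coeff n (Egf d χ ξ x)

/-- The alternating generalized twisted power sum `T_k(m; χ, ξ)`. -/
noncomputable def T (m : ℕ) (χ : ℤ → ℂ) (ξ : ℂ) (k : ℕ) : ℂ :=
  ∑ a ∈ Finset.range (m + 1), (-1 : ℂ) ^ a * χ a * ξ ^ a * (a : ℂ) ^ k



noncomputable def ee (c : ℂ) : PowerSeries ℂ := rescale c (exp ℂ)

lemma ee_def (c : ℂ) : ee c = rescale c (exp ℂ) := rfl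

lemma ee_mul (a b : ℂ) : ee a * ee b = ee (a + b) :=
  PowerSeries.exp_mul_exp_eq_exp_add a b

lemma constantCoeff_ee (c : ℂ) : constantCoeff (ee c) = 1 := by
  rw [ee, ← coeff_zero_eq_constantCoeff_apply, coeff_rescale]
  simp

lemma ee_pow (c : ℂ) (m : ℕ) : ee c ^ m = ee ((m : ℂ) * c) := by
  rw [ee, ← map_pow, exp_pow_eq_rescale_exp, rescale_rescale, ee, mul_comm]

noncomputable def UU (d : ℕ) (ξ : ℂ) (k : ℕ) : PowerSeries ℂ :=
  ξ ^ (d * k) • ee ((d * k : ℕ) : ℂ)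

noncomputable def GG (d : ℕ) (ξ : ℂ) (m k : ℕ) : PowerSeries ℂ :=
  ∑ j ∈ Finset.range m, (-(UU d ξ k)) ^ j

noncomputable def SS (d : ℕ) (χ : ℤ → ℂ) (ξ : ℂ) (m k : ℕ) : PowerSeries ℂ :=
  ∑ a ∈ Finset.range (m * d), ((-1 : ℂ) ^ a * χ a * ξ ^ (k * a)) • ee ((k : ℂ) * a)

lemma UU_pow (d : ℕ) (ξ : ℂ) (k m : ℕ) :
    (UU d ξ k) ^ m = ξ ^ (d * k * m) • ee ((d * k * m : ℕ) : ℂ) := by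
  rw [UU, smul_pow, ee_pow, ← pow_mul]
  push_cast
  ring_nf

lemma neg_UU_pow (d : ℕ) (ξ : ℂ) (k m : ℕ) :
    (-(UU d ξ k)) ^ m = ((-1 : ℂ) ^ m * ξ ^ (d * k * m)) • ee ((d * k * m : ℕ) : ℂ) := by
  rw [neg_pow, UU_pow]
  simp [smul_eq_C_mul]
  ring

lemma constantCoeff_UU_add_one (d : ℕ) (ξ : ℂ) (k : ℕ) :
    constantCoeff (UU d ξ k + 1) = ξ ^ (d * k) + 1 := by
  simp [UU, smul_eq_C_mul, constantCoeff_ee]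

lemma rescale_inv (c : ℂ) (f : PowerSeries ℂ) (h : constantCoeff f ≠ 0) :
    rescale c (f⁻¹) = (rescale c f)⁻¹ := by
  have hc : constantCoeff (rescale c f) ≠ 0 := by
    rwa [← coeff_zero_eq_constantCoeff_apply, coeff_rescale, pow_zero, one_mul,
      coeff_zero_eq_constantCoeff_apply]
  rw [PowerSeries.eq_inv_iff_mul_eq_one hc, ← map_mul,
    PowerSeries.inv_mul_cancel _ h, map_one]

lemma rescale_smul (c a : ℂ) (f : PowerSeries ℂ) :
    rescale c (a • f) = a • rescale c f := by
  ext n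
  simp [coeff_rescale, PowerSeries.coeff_smul, smul_eq_mul]
  ring

lemma GG_mul (d : ℕ) (ξ : ℂ) (m k : ℕ) (hm : Odd m) :
    GG d ξ m k * (UU d ξ k + 1) = ξ ^ (d * k * m) • ee ((d * k * m : ℕ) : ℂ) + 1 := by
  have := geom_sum_mul (-(UU d ξ k)) m
  rw [Odd.neg_pow hm, UU_pow] at this
  have h2 : GG d ξ m k * (-(UU d ξ k) - 1) =
      -(ξ ^ (d * k * m) • ee ((d * k * m : ℕ) : ℂ)) - 1 := this
  linear_combination -h2

lemma SS_eq (d : ℕ) (hd : Odd d) (χ : ℤ → ℂ) (hχ : Function.Periodic χ (d : ℤ))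
    (ξ : ℂ) (m k : ℕ) : SS d χ ξ m k = SS d χ ξ 1 k * GG d ξ m k := by
  induction m with
  | zero => simp [SS, GG]
  | succ m ih =>
    have hrange : (m + 1) * d = m * d + d := by ring
    have GG_succ : GG d ξ (m + 1) k = GG d ξ m k + (-(UU d ξ k)) ^ m := by
      rw [GG, Finset.sum_range_succ, ← GG]
    rw [SS, hrange, Finset.sum_range_add, ← SS, ih, GG_succ, mul_add]
    congr 1
    have hone : (1 : ℕ) * d = d := one_mul d
    rw [SS, hone, Finset.sum_mul]
    apply Finset.sum_congr rfl
    intro c _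
    have hχc : χ ((m * d + c : ℕ) : ℤ) = χ c := by
      have harg : ((m * d + c : ℕ) : ℤ) = (c : ℤ) + (m : ℤ) * (d : ℤ) := by push_cast; ring
      rw [harg, (hχ.nat_mul m) (c : ℤ)]
    have h1 : ((-1 : ℂ)) ^ (m * d + c) = (-1) ^ m * (-1) ^ c := by
      rw [pow_add, mul_comm m d, pow_mul, hd.neg_one_pow]
    have h2 : ξ ^ (k * (m * d + c)) = ξ ^ (k * c) * ξ ^ (d * k * m) := by
      rw [← pow_add]
      ring_nf
    have h3 : ee ((k : ℂ) * ((m * d + c : ℕ) : ℂ)) =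
        ee ((k : ℂ) * (c : ℂ)) * ee (((d * k * m : ℕ) : ℂ)) := by
      rw [ee_mul]
      congr 1
      push_cast
      ring
    rw [neg_UU_pow, smul_mul_smul_comm, hχc, h1, h2, h3]
    congr 1
    ring

lemma ne_zero_of_const (f : PowerSeries ℂ) (h : constantCoeff f ≠ 0) : f ≠ 0 := by
  intro h0
  rw [h0] at h
  simp at h

lemma GG_shuffle (d : ℕ) (ξ : ℂ) (k₁ k₃ m₁ m₃ : ℕ) (hm₁ : Odd m₁) (hm₃ : Odd m₃)
    (h1 : ξ ^ (d * k₁) + 1 ≠ 0) (h3 : ξ ^ (d * k₃) + 1 ≠ 0)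
    (hE : d * k₁ * m₁ = d * k₃ * m₃) :
    GG d ξ m₁ k₁ * (UU d ξ k₃ + 1)⁻¹ = GG d ξ m₃ k₃ * (UU d ξ k₁ + 1)⁻¹ := by
  have hc1 : constantCoeff (UU d ξ k₁ + 1) ≠ 0 := by rw [constantCoeff_UU_add_one]; exact h1
  have hc3 : constantCoeff (UU d ξ k₃ + 1) ≠ 0 := by rw [constantCoeff_UU_add_one]; exact h3
  have c1 : (UU d ξ k₁ + 1) * (UU d ξ k₁ + 1)⁻¹ = 1 := PowerSeries.mul_inv_cancel _ hc1
  have c3 : (UU d ξ k₃ + 1) * (UU d ξ k₃ + 1)⁻¹ = 1 := PowerSeries.mul_inv_cancel _ hc3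
  have e1 := GG_mul d ξ m₁ k₁ hm₁
  have e3 := GG_mul d ξ m₃ k₃ hm₃
  rw [hE] at e1
  have hne : (UU d ξ k₁ + 1) * (UU d ξ k₃ + 1) ≠ 0 :=
    mul_ne_zero (ne_zero_of_const _ hc1) (ne_zero_of_const _ hc3)
  apply mul_right_cancel₀ hne
  calc GG d ξ m₁ k₁ * (UU d ξ k₃ + 1)⁻¹ * ((UU d ξ k₁ + 1) * (UU d ξ k₃ + 1))
      = (GG d ξ m₁ k₁ * (UU d ξ k₁ + 1)) * ((UU d ξ k₃ + 1) * (UU d ξ k₃ + 1)⁻¹) := by ring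
    _ = (GG d ξ m₃ k₃ * (UU d ξ k₃ + 1)) * ((UU d ξ k₁ + 1) * (UU d ξ k₁ + 1)⁻¹) := by
        rw [c1, c3, e1, e3]
    _ = GG d ξ m₃ k₃ * (UU d ξ k₁ + 1)⁻¹ * ((UU d ξ k₁ + 1) * (UU d ξ k₃ + 1)) := by
        ring

lemma rescale_Egf (d : ℕ) (χ : ℤ → ℂ) (ξ : ℂ) (u v : ℕ)
    (hξ : ξ ^ (d * (u * v)) + 1 ≠ 0) (x : ℂ) :
    rescale ((u : ℂ) * v) (Egf d χ (ξ ^ (u * v)) x) =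
      2 * ee (x * ((u : ℂ) * v)) * (UU d ξ (u * v) + 1)⁻¹ * SS d χ ξ 1 (u * v) := by
  have hpow : (ξ ^ (u * v)) ^ d = ξ ^ (d * (u * v)) := by rw [← pow_mul, mul_comm]
  have hB : ((ξ ^ (u * v)) ^ d • rescale (d : ℂ) (exp ℂ) + 1 : PowerSeries ℂ) =
      (ξ ^ (u * v)) ^ d • ee (d : ℂ) + 1 := rfl
  have hconst : constantCoeff ((ξ ^ (u * v)) ^ d • rescale (d : ℂ) (exp ℂ) + 1) ≠ 0 := by
    rw [hB]
    have : constantCoeff ((ξ ^ (u * v)) ^ d • ee (d : ℂ) + 1) = (ξ ^ (u * v)) ^ d + 1 := by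
      simp [smul_eq_C_mul, constantCoeff_ee]
    rw [this, hpow]
    exact hξ
  have hBres : rescale ((u : ℂ) * v) ((ξ ^ (u * v)) ^ d • rescale (d : ℂ) (exp ℂ) + 1) =
      UU d ξ (u * v) + 1 := by
    rw [map_add, map_one, rescale_smul, rescale_rescale, UU, hpow, ee_def]
    congr 3
    push_cast
    ring
  rw [Egf, map_mul, map_mul, map_mul, map_ofNat, rescale_rescale, rescale_inv _ _ hconst,
    hBres, map_sum]
  congr 1
  rw [SS, one_mul]
  apply Finset.sum_congr rfl
  intro a _
  rw [rescale_smul, rescale_rescale, ee_def]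
  congr 2
  · rw [← pow_mul]
  · push_cast
    ring

lemma key (d : ℕ) (hd : Odd d) (u v w : ℕ) (hu : Odd u) (hv : Odd v)
    (hu0 : 0 < u) (hv0 : 0 < v)
    (χ : ℤ → ℂ) (hχ : Function.Periodic χ (d : ℤ)) (ξ : ℂ)
    (hξ : ξ ^ (d * (u * v)) + 1 ≠ 0) (n : ℕ) (y₁ : ℂ) :
    ((u : ℂ) * v) ^ n * ∑ a ∈ Finset.range (u * d), ∑ b ∈ Finset.range (v * d),
        (-1 : ℂ) ^ (a + b) * χ a * χ b * ξ ^ (w * (a * v + b * u)) *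
          E d χ (ξ ^ (u * v))
            ((w : ℂ) * y₁ + (w : ℂ) / (u : ℂ) * (a : ℂ) + (w : ℂ) / (v : ℂ) * (b : ℂ)) n
    = (n.factorial : ℂ) * coeff n
        (2 * ee (((u * v * w : ℕ) : ℂ) * y₁) * SS d χ ξ 1 (v * w) * SS d χ ξ 1 (u * w) *
          SS d χ ξ 1 (u * v) * GG d ξ u (v * w) * GG d ξ v (u * w) *
          (UU d ξ (u * v) + 1)⁻¹) := by
  have hu' : (u : ℂ) ≠ 0 := Nat.cast_ne_zero.mpr hu0.ne'
  have hv' : (v : ℂ) ≠ 0 := Nat.cast_ne_zero.mpr hv0.ne'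
  set c : ℂ := (u : ℂ) * v with hc
  set X : ℕ → ℕ → ℂ := fun a b =>
    (w : ℂ) * y₁ + (w : ℂ) / (u : ℂ) * (a : ℂ) + (w : ℂ) / (v : ℂ) * (b : ℂ) with hXdef
  set K : PowerSeries ℂ :=
    2 * ee (((u * v * w : ℕ) : ℂ) * y₁) * (UU d ξ (u * v) + 1)⁻¹ * SS d χ ξ 1 (u * v)
    with hK
  have step1 : ((u : ℂ) * v) ^ n * ∑ a ∈ Finset.range (u * d), ∑ b ∈ Finset.range (v * d),
        (-1 : ℂ) ^ (a + b) * χ a * χ b * ξ ^ (w * (a * v + b * u)) *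
          E d χ (ξ ^ (u * v)) (X a b) n
      = (n.factorial : ℂ) * coeff n
        (∑ a ∈ Finset.range (u * d), ∑ b ∈ Finset.range (v * d),
          ((-1 : ℂ) ^ (a + b) * χ a * χ b * ξ ^ (w * (a * v + b * u))) •
            rescale c (Egf d χ (ξ ^ (u * v)) (X a b))) := by
    rw [map_sum, Finset.mul_sum, Finset.mul_sum]
    apply Finset.sum_congr rfl
    intro a _
    rw [map_sum, Finset.mul_sum, Finset.mul_sum]
    apply Finset.sum_congr rfl
    intro b _
    rw [E, PowerSeries.coeff_smul, coeff_rescale, smul_eq_mul]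
    ring
  rw [step1]
  congr 1
  have hterm : ∀ a b : ℕ,
      ((-1 : ℂ) ^ (a + b) * χ a * χ b * ξ ^ (w * (a * v + b * u))) •
          rescale c (Egf d χ (ξ ^ (u * v)) (X a b)) =
        (((-1 : ℂ) ^ a * χ a * ξ ^ (v * w * a)) • ee (((v * w : ℕ) : ℂ) * (a : ℂ))) *
          ((((-1 : ℂ) ^ b * χ b * ξ ^ (u * w * b)) • ee (((u * w : ℕ) : ℂ) * (b : ℂ))) * K) := by
    intro a b
    rw [rescale_Egf d χ ξ u v hξ]
    have hX : X a b * c = ((u * v * w : ℕ) : ℂ) * y₁ +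
        (((v * w : ℕ) : ℂ) * (a : ℂ) + ((u * w : ℕ) : ℂ) * (b : ℂ)) := by
      rw [hXdef, hc]
      push_cast
      field_simp
      ring
    rw [hX, ← ee_mul, ← ee_mul]
    have hcoef : (-1 : ℂ) ^ (a + b) * χ a * χ b * ξ ^ (w * (a * v + b * u)) =
        ((-1 : ℂ) ^ a * χ a * ξ ^ (v * w * a)) * ((-1 : ℂ) ^ b * χ b * ξ ^ (u * w * b)) := by
      have hξsplit : ξ ^ (w * (a * v + b * u)) = ξ ^ (v * w * a) * ξ ^ (u * w * b) := by
        rw [← pow_add]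
        congr 1
        ring
      rw [pow_add, hξsplit]
      ring
    rw [hcoef, hK]
    simp only [smul_eq_C_mul, map_mul]
    ring
  rw [Finset.sum_congr rfl fun a _ => Finset.sum_congr rfl fun b _ => hterm a b]
  simp only [← Finset.mul_sum, ← Finset.sum_mul]
  rw [← SS, ← SS, SS_eq d hd χ hχ ξ u (v * w), SS_eq d hd χ hχ ξ v (u * w), hK]
  ring

set_option maxHeartbeats 2000000 in
/-- Theorem 6: the three double-sum expressions coincide. -/
theorem theorem6 (d w₁ w₂ w₃ : ℕ) (hd : Odd d) (hd0 : 0 < d)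
    (hw₁ : Odd w₁) (hw₂ : Odd w₂) (hw₃ : Odd w₃)
    (hw₁0 : 0 < w₁) (hw₂0 : 0 < w₂) (hw₃0 : 0 < w₃)
    (χ : ℤ → ℂ) (hχ : Function.Periodic χ (d : ℤ)) (ξ : ℂ)
    (hξ₁ : ξ ^ (d * w₂ * w₃) + 1 ≠ 0) (hξ₂ : ξ ^ (d * w₁ * w₃) + 1 ≠ 0)
    (hξ₃ : ξ ^ (d * w₁ * w₂) + 1 ≠ 0)
    (n : ℕ) (y₁ : ℂ) :
    ((w₁ : ℂ) * w₂) ^ n * ∑ a ∈ Finset.range (w₁ * d), ∑ b ∈ Finset.range (w₂ * d),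
        (-1 : ℂ) ^ (a + b) * χ a * χ b * ξ ^ (w₃ * (a * w₂ + b * w₁)) *
          E d χ (ξ ^ (w₁ * w₂))
            ((w₃ : ℂ) * y₁ + (w₃ : ℂ) / (w₁ : ℂ) * (a : ℂ) + (w₃ : ℂ) / (w₂ : ℂ) * (b : ℂ)) n =
      ((w₂ : ℂ) * w₃) ^ n * ∑ a ∈ Finset.range (w₂ * d), ∑ b ∈ Finset.range (w₃ * d),
        (-1 : ℂ) ^ (a + b) * χ a * χ b * ξ ^ (w₁ * (a * w₃ + b * w₂)) *
          E d χ (ξ ^ (w₂ * w₃))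
            ((w₁ : ℂ) * y₁ + (w₁ : ℂ) / (w₂ : ℂ) * (a : ℂ) + (w₁ : ℂ) / (w₃ : ℂ) * (b : ℂ)) n ∧
    ((w₂ : ℂ) * w₃) ^ n * ∑ a ∈ Finset.range (w₂ * d), ∑ b ∈ Finset.range (w₃ * d),
        (-1 : ℂ) ^ (a + b) * χ a * χ b * ξ ^ (w₁ * (a * w₃ + b * w₂)) *
          E d χ (ξ ^ (w₂ * w₃))
            ((w₁ : ℂ) * y₁ + (w₁ : ℂ) / (w₂ : ℂ) * (a : ℂ) + (w₁ : ℂ) / (w₃ : ℂ) * (b : ℂ)) n =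
      ((w₃ : ℂ) * w₁) ^ n * ∑ a ∈ Finset.range (w₃ * d), ∑ b ∈ Finset.range (w₁ * d),
        (-1 : ℂ) ^ (a + b) * χ a * χ b * ξ ^ (w₂ * (a * w₁ + b * w₃)) *
          E d χ (ξ ^ (w₁ * w₃))
            ((w₂ : ℂ) * y₁ + (w₂ : ℂ) / (w₃ : ℂ) * (a : ℂ) + (w₂ : ℂ) / (w₁ : ℂ) * (b : ℂ)) n := by
  have h₁₂ : ξ ^ (d * (w₁ * w₂)) + 1 ≠ 0 := by rw [← mul_assoc]; exact hξ₃
  have h₂₃ : ξ ^ (d * (w₂ * w₃)) + 1 ≠ 0 := by rw [← mul_assoc]; exact hξ₁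
  have h₁₃ : ξ ^ (d * (w₁ * w₃)) + 1 ≠ 0 := by rw [← mul_assoc]; exact hξ₂
  have h₃₁ : ξ ^ (d * (w₃ * w₁)) + 1 ≠ 0 := by rw [mul_comm w₃ w₁]; exact h₁₃
  constructor
  · have hs₁ := GG_shuffle d ξ (w₂ * w₃) (w₁ * w₂) w₁ w₃ hw₁ hw₃ h₂₃ h₁₂ (by ring)
    have hQ1 : 2 * ee (((w₂ * w₃ * w₁ : ℕ) : ℂ) * y₁) * SS d χ ξ 1 (w₃ * w₁) *
          SS d χ ξ 1 (w₂ * w₁) * SS d χ ξ 1 (w₂ * w₃) * GG d ξ w₂ (w₃ * w₁) *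
          GG d ξ w₃ (w₂ * w₁) * (UU d ξ (w₂ * w₃) + 1)⁻¹
        = 2 * ee (((w₁ * w₂ * w₃ : ℕ) : ℂ) * y₁) * SS d χ ξ 1 (w₂ * w₃) *
          SS d χ ξ 1 (w₁ * w₃) * SS d χ ξ 1 (w₁ * w₂) * GG d ξ w₁ (w₂ * w₃) *
          GG d ξ w₂ (w₁ * w₃) * (UU d ξ (w₁ * w₂) + 1)⁻¹ := by
      rw [show w₂ * w₃ * w₁ = w₁ * w₂ * w₃ by ring, show w₃ * w₁ = w₁ * w₃ by ring,
        show w₂ * w₁ = w₁ * w₂ by ring]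
      linear_combination (-(2 * ee (((w₁ * w₂ * w₃ : ℕ) : ℂ) * y₁) * SS d χ ξ 1 (w₂ * w₃) *
        SS d χ ξ 1 (w₁ * w₃) * SS d χ ξ 1 (w₁ * w₂) * GG d ξ w₂ (w₁ * w₃))) * hs₁
    rw [key d hd w₁ w₂ w₃ hw₁ hw₂ hw₁0 hw₂0 χ hχ ξ h₁₂ n y₁,
      key d hd w₂ w₃ w₁ hw₂ hw₃ hw₂0 hw₃0 χ hχ ξ h₂₃ n y₁, hQ1]
  · have hs₂ := GG_shuffle d ξ (w₁ * w₃) (w₂ * w₃) w₂ w₁ hw₂ hw₁ h₁₃ h₂₃ (by ring)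
    have hQ2 : 2 * ee (((w₃ * w₁ * w₂ : ℕ) : ℂ) * y₁) * SS d χ ξ 1 (w₁ * w₂) *
          SS d χ ξ 1 (w₃ * w₂) * SS d χ ξ 1 (w₃ * w₁) * GG d ξ w₃ (w₁ * w₂) *
          GG d ξ w₁ (w₃ * w₂) * (UU d ξ (w₃ * w₁) + 1)⁻¹
        = 2 * ee (((w₂ * w₃ * w₁ : ℕ) : ℂ) * y₁) * SS d χ ξ 1 (w₃ * w₁) *
          SS d χ ξ 1 (w₂ * w₁) * SS d χ ξ 1 (w₂ * w₃) * GG d ξ w₂ (w₃ * w₁) *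
          GG d ξ w₃ (w₂ * w₁) * (UU d ξ (w₂ * w₃) + 1)⁻¹ := by
      rw [show w₃ * w₁ * w₂ = w₁ * w₂ * w₃ by ring, show w₂ * w₃ * w₁ = w₁ * w₂ * w₃ by ring,
        show w₃ * w₁ = w₁ * w₃ by ring, show w₂ * w₁ = w₁ * w₂ by ring,
        show w₃ * w₂ = w₂ * w₃ by ring]
      linear_combination (-(2 * ee (((w₁ * w₂ * w₃ : ℕ) : ℂ) * y₁) * SS d χ ξ 1 (w₂ * w₃) *
        SS d χ ξ 1 (w₁ * w₃) * SS d χ ξ 1 (w₁ * w₂) * GG d ξ w₃ (w₁ * w₂))) * hs₂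
    rw [show w₁ * w₃ = w₃ * w₁ from mul_comm w₁ w₃,
      key d hd w₂ w₃ w₁ hw₂ hw₃ hw₂0 hw₃0 χ hχ ξ h₂₃ n y₁,
      key d hd w₃ w₁ w₂ hw₃ hw₁ hw₃0 hw₁0 χ hχ ξ h₃₁ n y₁, hQ2]
end

section
/- (Generating function factorization underlying the symmetries) Let d be an odd positive integer, χ : ℤ → ℂ d-periodic, ξ ∈ ℂ with ξ^{d w_i w_j}+1 ≠ 0 for all i≠j, and w₁,w₂,w₃ odd positive integers. Then in ℂ[[t]]: [(2 e^{w₁w₂w₃(y₁+y₂)t}(ξ^{dw₁w₂w₃} e^{dw₁w₂w₃ t}+1)) / ((ξ^{dw₂w₃} e^{dw₂w₃ t}+1)(ξ^{dw₁w₃} e^{dw₁w₃ t}+1)(ξ^{dw₁w₂} e^{dw₁w₂ t}+1))] · ∏_{(i,j) ∈ {(2,3),(1,3),(1,2)}} (∑_{a=0}^{d-1} (−1)^a χ(a) ξ^{a w_i w_j} e^{a w_i w_j t}) equals (∑_{k≥0} E_{k,χ,ξ^{w₂w₃}}(w₁y₁)(w₂w₃t)^k/k!) · (∑_{l≥0}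 E_{l,χ,ξ^{w₁w₃}}(w₂y₂)(w₁w₃t)^l/l!) · (∑_{m≥0} T_m(w₃d−1;χ,ξ^{w₁w₂})(w₁w₂t)^m/m!). -/
open Finset PowerSeries

lemma rescale_C' (a r : ℂ) : rescale a (C r) = C r := by
  ext n
  rw [coeff_rescale]
  simp [coeff_C]
  split <;> simp_all

lemma constantCoeff_rescale_exp (a : ℂ) : constantCoeff (rescale a (exp ℂ)) = 1 := by
  rw [← coeff_zero_eq_constantCoeff_apply, coeff_rescale]
  simp

lemma rescale_exp_pow (a : ℂ) (m : ℕ) :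
    (rescale a (exp ℂ)) ^ m = rescale ((m : ℂ) * a) (exp ℂ) := by
  induction m with
  | zero => simp [rescale_zero]
  | succ n ih =>
      rw [pow_succ, ih, exp_mul_exp_eq_exp_add]
      congr 1
      push_cast; ring

lemma constantCoeff_denom (r a : ℂ) :
    constantCoeff (r • rescale a (exp ℂ) + 1) = r + 1 := by
  simp [smul_eq_C_mul, constantCoeff_rescale_exp]


lemma Egf_mul_denom (d : ℕ) (χ : ℤ → ℂ) (ξ x : ℂ) (h : ξ ^ d + 1 ≠ 0) :
    Egf d χ ξ x * (ξ ^ d • rescale (d : ℂ) (exp ℂ) + 1) =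
      2 * rescale x (exp ℂ) *
        ∑ a ∈ Finset.range d, ((-1 : ℂ) ^ a * χ a * ξ ^ a) • rescale (a : ℂ) (exp ℂ) := by
  have hc : constantCoeff (ξ ^ d • rescale (d : ℂ) (exp ℂ) + 1) ≠ 0 := by
    rw [constantCoeff_denom]; exact h
  have hinv := PowerSeries.inv_mul_cancel _ hc
  unfold Egf
  calc 2 * rescale x (exp ℂ) * (ξ ^ d • rescale (d : ℂ) (exp ℂ) + 1)⁻¹ *
        (∑ a ∈ Finset.range d, ((-1 : ℂ) ^ a * χ a * ξ ^ a) • rescale (a : ℂ) (exp ℂ)) *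
        (ξ ^ d • rescale (d : ℂ) (exp ℂ) + 1)
      = 2 * rescale x (exp ℂ) *
        (∑ a ∈ Finset.range d, ((-1 : ℂ) ^ a * χ a * ξ ^ a) • rescale (a : ℂ) (exp ℂ)) *
        ((ξ ^ d • rescale (d : ℂ) (exp ℂ) + 1)⁻¹ * (ξ ^ d • rescale (d : ℂ) (exp ℂ) + 1)) := by
        ring
    _ = _ := by rw [hinv, mul_one]

lemma mk_E_eq (d : ℕ) (χ : ℤ → ℂ) (ξ x : ℂ) (c : ℕ) :
    PowerSeries.mk (fun k =>
        E d χ ξ x k * ((c : ℕ) : ℂ) ^ k / (k.factorial : ℂ)) =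
      rescale ((c : ℕ) : ℂ) (Egf d χ ξ x) := by
  ext n
  rw [coeff_mk, coeff_rescale]
  have hn : (n.factorial : ℂ) ≠ 0 := Nat.cast_ne_zero.mpr n.factorial_ne_zero
  unfold E
  field_simp

lemma mk_T_eq (n : ℕ) (χ : ℤ → ℂ) (ξ : ℂ) (c : ℕ) :
    PowerSeries.mk (fun m =>
        T n χ (ξ ^ c) m * ((c : ℕ) : ℂ) ^ m / (m.factorial : ℂ)) =
      ∑ a ∈ Finset.range (n + 1),
        ((-1 : ℂ) ^ a * χ a * ξ ^ (a * c)) • rescale ((a * c : ℕ) : ℂ) (exp ℂ) := by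
  ext m
  rw [coeff_mk, map_sum]
  unfold T
  rw [Finset.sum_mul, Finset.sum_div]
  refine Finset.sum_congr rfl fun a _ => ?_
  rw [coeff_smul, coeff_rescale, coeff_exp]
  have hm : (m.factorial : ℂ) ≠ 0 := Nat.cast_ne_zero.mpr m.factorial_ne_zero
  push_cast
  field_simp
  rw [pow_mul]
  ring_nf
  simp [hm]

lemma term_shift (d c m i : ℕ) (hd : Odd d) (χ : ℤ → ℂ)
    (hχ : Function.Periodic χ (d : ℤ)) (ξ : ℂ) :
    ((-1 : ℂ) ^ (m * d + i) * χ ((m * d + i : ℕ) : ℤ) * ξ ^ ((m * d + i) * c)) •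
        rescale (((m * d + i) * c : ℕ) : ℂ) (exp ℂ) =
      (-(ξ ^ (d * c) • rescale ((d * c : ℕ) : ℂ) (exp ℂ))) ^ m *
        (((-1 : ℂ) ^ i * χ i * ξ ^ (i * c)) • rescale ((i * c : ℕ) : ℂ) (exp ℂ)) := by
  have h1 : ((-1 : ℂ)) ^ (m * d + i) = (-1) ^ m * (-1) ^ i := by
    rw [pow_add, pow_mul', hd.neg_one_pow]
  have h2 : χ ((m * d + i : ℕ) : ℤ) = χ (i : ℤ) := by
    push_cast
    rw [add_comm]
    exact (hχ.nat_mul m) _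
  have h3 : ξ ^ ((m * d + i) * c) = (ξ ^ (d * c)) ^ m * ξ ^ (i * c) := by
    rw [← pow_mul, ← pow_add]
    congr 1
    ring
  have h4 : rescale (((m * d + i) * c : ℕ) : ℂ) (exp ℂ) =
      rescale ((m : ℂ) * ((d * c : ℕ) : ℂ)) (exp ℂ) * rescale ((i * c : ℕ) : ℂ) (exp ℂ) := by
    rw [exp_mul_exp_eq_exp_add]
    congr 1
    push_cast
    ring
  rw [← neg_smul, smul_pow, rescale_exp_pow, h1, h2, h3, h4]
  simp only [smul_eq_C_mul, map_mul, map_pow, map_neg, map_one]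
  ring

lemma chunks (d c w : ℕ) (hd : Odd d) (χ : ℤ → ℂ)
    (hχ : Function.Periodic χ (d : ℤ)) (ξ : ℂ) :
    ∑ a ∈ Finset.range (w * d),
        ((-1 : ℂ) ^ a * χ a * ξ ^ (a * c)) • rescale ((a * c : ℕ) : ℂ) (exp ℂ) =
      (∑ j ∈ Finset.range w, (-(ξ ^ (d * c) • rescale ((d * c : ℕ) : ℂ) (exp ℂ))) ^ j) *
        ∑ a ∈ Finset.range d,
          ((-1 : ℂ) ^ a * χ a * ξ ^ (a * c)) • rescale ((a * c : ℕ) : ℂ) (exp ℂ) := by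
  induction w with
  | zero => simp
  | succ m ih =>
      rw [Nat.succ_mul, Finset.sum_range_add, ih, Finset.sum_range_succ, add_mul]
      congr 1
      rw [Finset.mul_sum]
      exact Finset.sum_congr rfl fun i _ => term_shift d c m i hd χ hχ ξ

lemma sum_big_mul (d c w : ℕ) (hd : Odd d) (hw : Odd w) (χ : ℤ → ℂ)
    (hχ : Function.Periodic χ (d : ℤ)) (ξ : ℂ) :
    (∑ a ∈ Finset.range (w * d),
        ((-1 : ℂ) ^ a * χ a * ξ ^ (a * c)) • rescale ((a * c : ℕ) : ℂ) (exp ℂ)) *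
      (ξ ^ (d * c) • rescale ((d * c : ℕ) : ℂ) (exp ℂ) + 1) =
    (ξ ^ (d * c * w) • rescale ((d * c * w : ℕ) : ℂ) (exp ℂ) + 1) *
      ∑ a ∈ Finset.range d,
        ((-1 : ℂ) ^ a * χ a * ξ ^ (a * c)) • rescale ((a * c : ℕ) : ℂ) (exp ℂ) := by
  rw [chunks d c w hd χ hχ ξ]
  set X := ξ ^ (d * c) • rescale ((d * c : ℕ) : ℂ) (exp ℂ) with hX
  have hXw : X ^ w = ξ ^ (d * c * w) • rescale ((d * c * w : ℕ) : ℂ) (exp ℂ) := by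
    rw [hX, smul_pow, rescale_exp_pow, ← pow_mul]
    congr 1
    push_cast
    ring
  have hg : (∑ j ∈ Finset.range w, (-X) ^ j) * (X + 1) =
      ξ ^ (d * c * w) • rescale ((d * c * w : ℕ) : ℂ) (exp ℂ) + 1 := by
    have hgeo := geom_sum_mul (-X) w
    rw [hw.neg_pow] at hgeo
    rw [← hXw]
    linear_combination -hgeo
  linear_combination
    (∑ a ∈ Finset.range d,
        ((-1 : ℂ) ^ a * χ a * ξ ^ (a * c)) • rescale ((a * c : ℕ) : ℂ) (exp ℂ)) * hg

lemma rescaled_Egf (d c : ℕ) (χ : ℤ → ℂ) (ξ x : ℂ) (h : ξ ^ (d * c) + 1 ≠ 0) :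
    rescale ((c : ℕ) : ℂ) (Egf d χ (ξ ^ c) x) *
      (ξ ^ (d * c) • rescale ((d * c : ℕ) : ℂ) (exp ℂ) + 1) =
    2 * rescale (x * ((c : ℕ) : ℂ)) (exp ℂ) *
      ∑ a ∈ Finset.range d,
        ((-1 : ℂ) ^ a * χ a * ξ ^ (a * c)) • rescale ((a * c : ℕ) : ℂ) (exp ℂ) := by
  have h' : (ξ ^ c) ^ d + 1 ≠ 0 := by
    rw [← pow_mul, mul_comm c d]
    exact h
  have key := congrArg (rescale ((c : ℕ) : ℂ)) (Egf_mul_denom d χ (ξ ^ c) x h')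
  simp only [map_mul, map_add, map_one, map_sum, smul_eq_C_mul, rescale_C', rescale_rescale,
    map_ofNat] at key
  simp only [smul_eq_C_mul, Nat.cast_mul, pow_mul', map_mul]
  exact key

/-- The evaluation of `I(Λ₂₃¹)`: the closed form of the quotient of fermionic integrals
equals the product of the three exponential generating functions. -/
theorem lambda23_one_factorization (d w₁ w₂ w₃ : ℕ) (hd : Odd d) (hd0 : 0 < d)
    (hw₁ : Odd w₁) (hw₂ : Odd w₂) (hw₃ : Odd w₃)
    (hw₁0 : 0 < w₁) (hw₂0 : 0 < w₂) (hw₃0 : 0 < w₃)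
    (χ : ℤ → ℂ) (hχ : Function.Periodic χ (d : ℤ)) (ξ : ℂ)
    (hξ₁ : ξ ^ (d * w₂ * w₃) + 1 ≠ 0) (hξ₂ : ξ ^ (d * w₁ * w₃) + 1 ≠ 0)
    (hξ₃ : ξ ^ (d * w₁ * w₂) + 1 ≠ 0)
    (y₁ y₂ : ℂ) :
    (4 : PowerSeries ℂ) *
        rescale (((w₁ * w₂ * w₃ : ℕ) : ℂ) * (y₁ + y₂)) (exp ℂ) *
        (ξ ^ (d * w₁ * w₂ * w₃) • rescale ((d * w₁ * w₂ * w₃ : ℕ) : ℂ) (exp ℂ) + 1) *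
        (ξ ^ (d * w₂ * w₃) • rescale ((d * w₂ * w₃ : ℕ) : ℂ) (exp ℂ) + 1)⁻¹ *
        (ξ ^ (d * w₁ * w₃) • rescale ((d * w₁ * w₃ : ℕ) : ℂ) (exp ℂ) + 1)⁻¹ *
        (ξ ^ (d * w₁ * w₂) • rescale ((d * w₁ * w₂ : ℕ) : ℂ) (exp ℂ) + 1)⁻¹ *
        (∑ a ∈ Finset.range d,
          ((-1 : ℂ) ^ a * χ a * ξ ^ (a * w₂ * w₃)) • rescale ((a * w₂ * w₃ : ℕ) : ℂ) (exp ℂ)) *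
        (∑ a ∈ Finset.range d,
          ((-1 : ℂ) ^ a * χ a * ξ ^ (a * w₁ * w₃)) • rescale ((a * w₁ * w₃ : ℕ) : ℂ) (exp ℂ)) *
        (∑ a ∈ Finset.range d,
          ((-1 : ℂ) ^ a * χ a * ξ ^ (a * w₁ * w₂)) • rescale ((a * w₁ * w₂ : ℕ) : ℂ) (exp ℂ)) =
      PowerSeries.mk (fun k =>
          E d χ (ξ ^ (w₂ * w₃)) ((w₁ : ℂ) * y₁) k * ((w₂ * w₃ : ℕ) : ℂ) ^ k / (k.factorial : ℂ)) *
        PowerSeries.mk (fun l =>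
          E d χ (ξ ^ (w₁ * w₃)) ((w₂ : ℂ) * y₂) l * ((w₁ * w₃ : ℕ) : ℂ) ^ l / (l.factorial : ℂ)) *
        PowerSeries.mk (fun m =>
          T (w₃ * d - 1) χ (ξ ^ (w₁ * w₂)) m * ((w₁ * w₂ : ℕ) : ℂ) ^ m / (m.factorial : ℂ)) := by
  have hξ₁' : ξ ^ (d * (w₂ * w₃)) + 1 ≠ 0 := by rwa [← mul_assoc]
  have hξ₂' : ξ ^ (d * (w₁ * w₃)) + 1 ≠ 0 := by rwa [← mul_assoc]
  have hξ₃' : ξ ^ (d * (w₁ * w₂)) + 1 ≠ 0 := by rwa [← mul_assoc]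
  have hw3d : w₃ * d - 1 + 1 = w₃ * d :=
    Nat.sub_add_cancel (Nat.one_le_iff_ne_zero.mpr (by positivity))
  rw [mk_E_eq, mk_E_eq, mk_T_eq, hw3d]
  have hc₁ : constantCoeff
      (ξ ^ (d * (w₂ * w₃)) • rescale ((d * (w₂ * w₃) : ℕ) : ℂ) (exp ℂ) + 1) ≠ 0 := by
    rw [constantCoeff_denom]; exact hξ₁'
  have hc₂ : constantCoeff
      (ξ ^ (d * (w₁ * w₃)) • rescale ((d * (w₁ * w₃) : ℕ) : ℂ) (exp ℂ) + 1) ≠ 0 := by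
    rw [constantCoeff_denom]; exact hξ₂'
  have hc₃ : constantCoeff
      (ξ ^ (d * (w₁ * w₂)) • rescale ((d * (w₁ * w₂) : ℕ) : ℂ) (exp ℂ) + 1) ≠ 0 := by
    rw [constantCoeff_denom]; exact hξ₃'
  have hA₁ : rescale ((w₂ * w₃ : ℕ) : ℂ) (Egf d χ (ξ ^ (w₂ * w₃)) ((w₁ : ℂ) * y₁)) =
      2 * rescale (((w₁ : ℂ) * y₁) * ((w₂ * w₃ : ℕ) : ℂ)) (exp ℂ) *
        (∑ a ∈ Finset.range d, ((-1 : ℂ) ^ a * χ a * ξ ^ (a * (w₂ * w₃))) •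
          rescale ((a * (w₂ * w₃) : ℕ) : ℂ) (exp ℂ)) *
        (ξ ^ (d * (w₂ * w₃)) • rescale ((d * (w₂ * w₃) : ℕ) : ℂ) (exp ℂ) + 1)⁻¹ := by
    have h := rescaled_Egf d (w₂ * w₃) χ ξ ((w₁ : ℂ) * y₁) hξ₁'
    have hm := PowerSeries.mul_inv_cancel _ hc₁
    linear_combination (ξ ^ (d * (w₂ * w₃)) • rescale ((d * (w₂ * w₃) : ℕ) : ℂ) (exp ℂ) + 1)⁻¹ * h
      - rescale ((w₂ * w₃ : ℕ) : ℂ) (Egf d χ (ξ ^ (w₂ * w₃)) ((w₁ : ℂ) * y₁)) * hm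
  have hA₂ : rescale ((w₁ * w₃ : ℕ) : ℂ) (Egf d χ (ξ ^ (w₁ * w₃)) ((w₂ : ℂ) * y₂)) =
      2 * rescale (((w₂ : ℂ) * y₂) * ((w₁ * w₃ : ℕ) : ℂ)) (exp ℂ) *
        (∑ a ∈ Finset.range d, ((-1 : ℂ) ^ a * χ a * ξ ^ (a * (w₁ * w₃))) •
          rescale ((a * (w₁ * w₃) : ℕ) : ℂ) (exp ℂ)) *
        (ξ ^ (d * (w₁ * w₃)) • rescale ((d * (w₁ * w₃) : ℕ) : ℂ) (exp ℂ) + 1)⁻¹ := by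
    have h := rescaled_Egf d (w₁ * w₃) χ ξ ((w₂ : ℂ) * y₂) hξ₂'
    have hm := PowerSeries.mul_inv_cancel _ hc₂
    linear_combination (ξ ^ (d * (w₁ * w₃)) • rescale ((d * (w₁ * w₃) : ℕ) : ℂ) (exp ℂ) + 1)⁻¹ * h
      - rescale ((w₁ * w₃ : ℕ) : ℂ) (Egf d χ (ξ ^ (w₁ * w₃)) ((w₂ : ℂ) * y₂)) * hm
  have hA₃ : (∑ a ∈ Finset.range (w₃ * d), ((-1 : ℂ) ^ a * χ a * ξ ^ (a * (w₁ * w₂))) •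
        rescale ((a * (w₁ * w₂) : ℕ) : ℂ) (exp ℂ)) =
      (ξ ^ (d * (w₁ * w₂) * w₃) • rescale ((d * (w₁ * w₂) * w₃ : ℕ) : ℂ) (exp ℂ) + 1) *
        (∑ a ∈ Finset.range d, ((-1 : ℂ) ^ a * χ a * ξ ^ (a * (w₁ * w₂))) •
          rescale ((a * (w₁ * w₂) : ℕ) : ℂ) (exp ℂ)) *
        (ξ ^ (d * (w₁ * w₂)) • rescale ((d * (w₁ * w₂) : ℕ) : ℂ) (exp ℂ) + 1)⁻¹ := by
    have h := sum_big_mul d (w₁ * w₂) w₃ hd hw₃ χ hχ ξ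
    have hm := PowerSeries.mul_inv_cancel _ hc₃
    linear_combination (ξ ^ (d * (w₁ * w₂)) • rescale ((d * (w₁ * w₂) : ℕ) : ℂ) (exp ℂ) + 1)⁻¹ * h
      - (∑ a ∈ Finset.range (w₃ * d), ((-1 : ℂ) ^ a * χ a * ξ ^ (a * (w₁ * w₂))) •
          rescale ((a * (w₁ * w₂) : ℕ) : ℂ) (exp ℂ)) * hm
  have eE : rescale (((w₁ : ℂ) * y₁) * ((w₂ * w₃ : ℕ) : ℂ)) (exp ℂ) *
        rescale (((w₂ : ℂ) * y₂) * ((w₁ * w₃ : ℕ) : ℂ)) (exp ℂ) =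
      rescale (((w₁ * w₂ * w₃ : ℕ) : ℂ) * (y₁ + y₂)) (exp ℂ) := by
    rw [exp_mul_exp_eq_exp_add]
    congr 1
    push_cast
    ring
  simp only [mul_assoc] at hA₁ hA₂ hA₃ eE ⊢
  rw [hA₁, hA₂, hA₃, ← eE]
  ring
end
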